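/- arXiv:2404.16786 — 2 statements merged into one kernel-verified Lean document; each statement's English description precedes it below -/
import Mathlib

section
/- Define B(n,k) = (-1)^{n-k} · (k-1)! · S(n,k) for n ≥ 1 and 1 ≤ k ≤ n, where S is the Stirling number of the second kind. Then for all n ≥ 0 and 1 ≤ k ≤ n+1, k · B(n+1,k) = Σ_{ℓ=k-1}^{n} C(n+1,ℓ) · B(ℓ+1,k). -/
/-- Stirling numbers of the second kind. -/
def stirling : ℕ → ℕ → ℕ
  | 0, 0 => 1
  | 0, _ + 1 => 0
  | _ + 1, 0 => 0
  | n + 1, k + 1 => (k + 1) * stirling n (k + 1) + stirling n k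

/-- `B(n,k) = (-1)^(n-k) · (k-1)! · S(n,k)`. -/
def Bcoeff (n k : ℕ) : ℤ :=
  (-1 : ℤ) ^ (n - k) * ((k - 1).factorial : ℤ) * (stirling n k : ℤ)


lemma stirling_zero_right (n : ℕ) : stirling (n+1) 0 = 0 := rfl

lemma stirling_eq_zero_of_lt : ∀ n k, n < k → stirling n k = 0 := by
  intro n
  induction n with
  | zero => intro k hk; cases k with | zero => omega | succ j => rfl
  | succ m ih =>
    intro k hk
    cases k with
    | zero => omega
    | succ j =>
      show (j + 1) * stirling m (j + 1) + stirling m j = 0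
      rw [ih (j+1) (by omega), ih j (by omega)]
      simp

lemma key (m : ℕ) : ∀ k : ℕ, ∑ ℓ ∈ Finset.range (m+1), (-1:ℤ)^ℓ * ((m.choose ℓ : ℕ) : ℤ) * (stirling (ℓ+1) (k+1) : ℤ) = (-1:ℤ)^m * (stirling m k : ℤ) := by
  induction m with
  | zero => intro k; simp [stirling]
  | succ m ih =>
    intro k
    have hA : ∑ ℓ ∈ Finset.range (m+1), (-1:ℤ)^ℓ * (m.choose ℓ : ℤ) * (stirling (ℓ+1) (k+1) : ℤ)
        = (-1:ℤ)^m * (stirling m k : ℤ) := ih k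
    -- decomposition
    have hdec : ∑ ℓ ∈ Finset.range (m+2), (-1:ℤ)^ℓ * ((m+1).choose ℓ : ℤ) * (stirling (ℓ+1) (k+1) : ℤ)
        = (∑ ℓ ∈ Finset.range (m+1), (-1:ℤ)^ℓ * (m.choose ℓ : ℤ) * (stirling (ℓ+1) (k+1) : ℤ))
          - ∑ ℓ ∈ Finset.range (m+1), (-1:ℤ)^ℓ * (m.choose ℓ : ℤ) * (stirling (ℓ+2) (k+1) : ℤ) := by
      have h2 : ∑ ℓ ∈ Finset.range (m+2), (-1:ℤ)^ℓ * (m.choose ℓ : ℤ) * (stirling (ℓ+1) (k+1) : ℤ)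
          = ∑ ℓ ∈ Finset.range (m+1), (-1:ℤ)^ℓ * (m.choose ℓ : ℤ) * (stirling (ℓ+1) (k+1) : ℤ) := by
        rw [Finset.sum_range_succ]
        simp [Nat.choose_succ_self]
      rw [← h2]
      rw [Finset.sum_range_succ' (fun ℓ => (-1:ℤ)^ℓ * ((m+1).choose ℓ : ℤ) * (stirling (ℓ+1) (k+1) : ℤ)),
          Finset.sum_range_succ' (fun ℓ => (-1:ℤ)^ℓ * (m.choose ℓ : ℤ) * (stirling (ℓ+1) (k+1) : ℤ))]
      have hterm : ∀ i ∈ Finset.range (m+1),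
          (-1:ℤ)^(i+1) * ((m+1).choose (i+1) : ℤ) * (stirling (i+1+1) (k+1) : ℤ)
          = ((-1:ℤ)^(i+1) * (m.choose (i+1) : ℤ) * (stirling (i+1+1) (k+1) : ℤ)
            - (-1:ℤ)^i * (m.choose i : ℤ) * (stirling (i+2) (k+1) : ℤ)) := by
        intro i _
        have h3 : ((m+1).choose (i+1) : ℤ) = (m.choose i : ℤ) + (m.choose (i+1) : ℤ) := by
          rw [Nat.choose_succ_succ]; push_cast; ring
        rw [h3]; ring
      rw [Finset.sum_congr rfl hterm, Finset.sum_sub_distrib]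
      simp
      ring
    -- stirling recurrence inside B
    have hB : ∑ ℓ ∈ Finset.range (m+1), (-1:ℤ)^ℓ * (m.choose ℓ : ℤ) * (stirling (ℓ+2) (k+1) : ℤ)
        = (k+1) * ((-1:ℤ)^m * (stirling m k : ℤ))
          + ∑ ℓ ∈ Finset.range (m+1), (-1:ℤ)^ℓ * (m.choose ℓ : ℤ) * (stirling (ℓ+1) k : ℤ) := by
      rw [← hA, Finset.mul_sum, ← Finset.sum_add_distrib]
      apply Finset.sum_congr rfl
      intro i _
      have : (stirling (i+2) (k+1) : ℤ) = (k+1) * (stirling (i+1) (k+1) : ℤ) + (stirling (i+1) k : ℤ) := by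
        show ((((k + 1) * stirling (i+1) (k + 1) + stirling (i+1) k : ℕ)) : ℤ) = _
        push_cast; ring
      rw [this]; ring
    rw [hdec, hA, hB]
    cases k with
    | zero =>
      have hU : ∑ ℓ ∈ Finset.range (m+1), (-1:ℤ)^ℓ * (m.choose ℓ : ℤ) * (stirling (ℓ+1) 0 : ℤ) = 0 := by
        apply Finset.sum_eq_zero; intro i _; rw [stirling_zero_right]; simp
      rw [hU]
      show _ = (-1:ℤ)^(m+1) * ((stirling (m+1) 0 : ℕ) : ℤ)
      rw [stirling_zero_right]
      push_cast; ring
    | succ j =>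
      rw [ih j]
      show _ = (-1:ℤ)^(m+1) * (((j + 1) * stirling m (j + 1) + stirling m j : ℕ) : ℤ)
      push_cast; ring


lemma neg_one_pow_sub (a b : ℕ) (h : b ≤ a) : (-1:ℤ)^(a-b) = (-1)^a * (-1)^b := by
  have h3 : (-1:ℤ)^a = (-1)^(a-b) * (-1)^b := by rw [← pow_add]; congr 1; omega
  have h4 : (-1:ℤ)^b * (-1)^b = 1 := by rw [← mul_pow]; norm_num
  rw [h3, mul_assoc, h4, mul_one]


theorem Bcoeff_identity (n k : ℕ) (hk1 : 1 ≤ k) (hk2 : k ≤ n + 1) :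
    (k : ℤ) * Bcoeff (n + 1) k =
      ∑ ℓ ∈ Finset.Icc (k - 1) n, ((n + 1).choose ℓ : ℤ) * Bcoeff (ℓ + 1) k := by
  obtain ⟨j, rfl⟩ : ∃ j, k = j + 1 := ⟨k - 1, by omega⟩
  have hj : j ≤ n := by omega
  have hk := key (n+1) j
  rw [Finset.sum_range_succ] at hk
  have hrec : (stirling (n+1+1) (j+1) : ℤ)
      = (j+1) * (stirling (n+1) (j+1) : ℤ) + (stirling (n+1) j : ℤ) := by
    show (((j+1) * stirling (n+1) (j+1) + stirling (n+1) j : ℕ) : ℤ) = _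
    push_cast; ring
  rw [Nat.choose_self, hrec, pow_succ] at hk
  have hsum : ∑ ℓ ∈ Finset.range (n+1), (-1:ℤ)^ℓ * ((n+1).choose ℓ : ℤ) * (stirling (ℓ+1) (j+1) : ℤ)
      = (-1:ℤ)^n * (j+1) * (stirling (n+1) (j+1) : ℤ) := by
    push_cast at hk ⊢
    linarith
  have hIcc : ∑ ℓ ∈ Finset.Icc j n, (-1:ℤ)^ℓ * ((n+1).choose ℓ : ℤ) * (stirling (ℓ+1) (j+1) : ℤ)
      = (-1:ℤ)^n * (j+1) * (stirling (n+1) (j+1) : ℤ) := by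
    rw [← hsum]
    apply Finset.sum_subset
    · intro x hx
      simp only [Finset.mem_Icc, Finset.mem_range] at *
      omega
    · intro x hx1 hx2
      simp only [Finset.mem_Icc, Finset.mem_range] at hx1 hx2
      rw [stirling_eq_zero_of_lt (x+1) (j+1) (by omega)]
      simp
  have hterm : ∀ ℓ ∈ Finset.Icc j n, ((n+1).choose ℓ : ℤ) * Bcoeff (ℓ+1) (j+1)
      = ((-1:ℤ)^j * (j.factorial : ℤ)) *
        ((-1:ℤ)^ℓ * ((n+1).choose ℓ : ℤ) * (stirling (ℓ+1) (j+1) : ℤ)) := by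
    intro ℓ hℓ
    simp only [Finset.mem_Icc] at hℓ
    unfold Bcoeff
    rw [show ℓ + 1 - (j+1) = ℓ - j by omega, neg_one_pow_sub ℓ j hℓ.1,
      show j + 1 - 1 = j from rfl]
    ring
  rw [show j + 1 - 1 = j from rfl, Finset.sum_congr rfl hterm, ← Finset.mul_sum, hIcc]
  unfold Bcoeff
  rw [show n + 1 - (j+1) = n - j by omega, neg_one_pow_sub n j hj,
    show j + 1 - 1 = j from rfl]
  push_cast
  ring
end

section
/- For all n, m ≥ 0, Σ_{k=1}^{n+1} (-1)^{n-k+1} · k! · k^m · S(n+1,k) = Σ_{k=1}^{m+1} (-1)^{m-k+1} · k! · k^n · S(m+1,k), where S denotes the Stirling numbers of the second kind. -/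
@[simp] lemma stirling_succ_zero (n : ℕ) : stirling (n + 1) 0 = 0 := rfl

lemma stirling_succ (n k : ℕ) :
    stirling (n + 1) (k + 1) = (k + 1) * stirling n (k + 1) + stirling n k := rfl

lemma stirling_of_lt : ∀ n k : ℕ, n < k → stirling n k = 0 := by
  intro n
  induction n with
  | zero =>
    intro k hk
    match k, hk with
    | k + 1, _ => rfl
  | succ n ih =>
    intro k hk
    match k, hk with
    | k + 1, hk =>
      rw [stirling_succ, ih (k + 1) (by omega), ih k (by omega)]
      ring

@[simp] lemma stirling_one (n : ℕ) : stirling (n + 1) 1 = 1 := by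
  induction n with
  | zero => rfl
  | succ n ih => rw [stirling_succ, ih]; rfl

/-- Key binomial identity for Stirling numbers. -/
lemma stirling_key (m : ℕ) : ∀ k : ℕ,
    ∑ i ∈ Finset.range (m + 1), (m + 1).choose i * stirling (i + 1) k
      = k * stirling (m + 1) k + k * (k + 1) * stirling (m + 1) (k + 1) := by
  induction m with
  | zero =>
    intro k
    match k with
    | 0 => simp
    | 1 => simp [show stirling 1 2 = 0 from stirling_of_lt 1 2 (by omega)]
    | k + 2 =>
      simp [stirling_of_lt 1 (k + 2) (by omega), stirling_of_lt 1 (k + 3) (by omega)]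
  | succ m ih =>
    intro k
    rw [Finset.sum_range_succ']
    have hchoose : ∀ i, (m + 2).choose (i + 1) = (m + 1).choose i + (m + 1).choose (i + 1) :=
      fun i => Nat.choose_succ_succ (m + 1) i
    have h1 : ∑ i ∈ Finset.range (m + 1), (m + 2).choose (i + 1) * stirling (i + 1 + 1) k
        = ∑ i ∈ Finset.range (m + 1), (m + 1).choose i * stirling (i + 2) k
          + ∑ i ∈ Finset.range (m + 1), (m + 1).choose (i + 1) * stirling (i + 2) k := by
      rw [← Finset.sum_add_distrib]
      exact Finset.sum_congr rfl fun i _ => by rw [hchoose]; ring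
    rw [h1]
    -- second sum: reindex back: ∑_{i∈range(m+1)} C(m+1,i+1) S(i+2,k)
    --   = ∑_{j∈range(m+2)} C(m+1,j) S(j+1,k) - C(m+1,0) S(1,k)
    have h2 : ∑ i ∈ Finset.range (m + 1), (m + 1).choose (i + 1) * stirling (i + 2) k
          + (m + 2).choose 0 * stirling (0 + 1) k
        = ∑ j ∈ Finset.range (m + 1), (m + 1).choose j * stirling (j + 1) k
          + stirling (m + 2) k := by
      have := Finset.sum_range_succ' (fun j => (m + 1).choose j * stirling (j + 1) k) (m + 1)
      rw [Finset.sum_range_succ] at this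
      simpa using this.symm
    rw [add_assoc, h2, ih k]
    -- now handle ∑ C(m+1,i) S(i+2,k) by cases on k
    match k with
    | 0 =>
      have h0 : ∀ i ∈ Finset.range (m + 1), (m + 1).choose i * stirling (i + 1 + 1) 0 = 0 := by
        intro i _; simp
      rw [Finset.sum_congr rfl h0]
      simp
    | k + 1 =>
      have h3 : ∑ i ∈ Finset.range (m + 1), (m + 1).choose i * stirling (i + 2) (k + 1)
          = (k + 1) * (∑ i ∈ Finset.range (m + 1), (m + 1).choose i * stirling (i + 1) (k + 1))
            + ∑ i ∈ Finset.range (m + 1), (m + 1).choose i * stirling (i + 1) k := by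
        rw [Finset.mul_sum, ← Finset.sum_add_distrib]
        exact Finset.sum_congr rfl fun i _ => by rw [stirling_succ]; ring
      rw [h3, ih (k + 1), ih k,
        stirling_succ (m + 1) k, stirling_succ (m + 1) (k + 1)]
      ring

/-- ℕ-version of the recursion for the symmetric double-Stirling sum. -/
lemma Qrec (n m : ℕ) :
    ∑ i ∈ Finset.range (m + 1), (m + 1).choose i *
        ∑ k ∈ Finset.range (n + 1),
          k.factorial * (k + 1).factorial * stirling (n + 1) (k + 1) * stirling (i + 1) (k + 1)
      = ∑ k ∈ Finset.range (n + 2),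
          k.factorial * (k + 1).factorial * stirling (n + 2) (k + 1) * stirling (m + 1) (k + 1) := by
  have hswap : ∑ i ∈ Finset.range (m + 1), (m + 1).choose i *
        ∑ k ∈ Finset.range (n + 1),
          k.factorial * (k + 1).factorial * stirling (n + 1) (k + 1) * stirling (i + 1) (k + 1)
      = ∑ k ∈ Finset.range (n + 1), k.factorial * (k + 1).factorial * stirling (n + 1) (k + 1)
          * ∑ i ∈ Finset.range (m + 1), (m + 1).choose i * stirling (i + 1) (k + 1) := by
    simp only [Finset.mul_sum]
    rw [Finset.sum_comm]
    exact Finset.sum_congr rfl fun k _ => Finset.sum_congr rfl fun i _ => by ring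
  rw [hswap]
  have hL : ∑ k ∈ Finset.range (n + 1), k.factorial * (k + 1).factorial * stirling (n + 1) (k + 1)
          * ∑ i ∈ Finset.range (m + 1), (m + 1).choose i * stirling (i + 1) (k + 1)
      = ∑ k ∈ Finset.range (n + 1), (k.factorial * (k + 1).factorial * stirling (n + 1) (k + 1)
          * ((k + 1) * stirling (m + 1) (k + 1))
          + k.factorial * (k + 1).factorial * stirling (n + 1) (k + 1)
          * ((k + 1) * (k + 2) * stirling (m + 1) (k + 2))) := by
    refine Finset.sum_congr rfl fun k _ => ?_
    rw [stirling_key m (k + 1)]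
    ring
  rw [hL, Finset.sum_add_distrib]
  -- RHS manipulation
  have hR : ∑ k ∈ Finset.range (n + 2),
        k.factorial * (k + 1).factorial * stirling (n + 2) (k + 1) * stirling (m + 1) (k + 1)
      = ∑ k ∈ Finset.range (n + 2),
          (k.factorial * (k + 1).factorial * ((k + 1) * stirling (n + 1) (k + 1))
              * stirling (m + 1) (k + 1)
            + k.factorial * (k + 1).factorial * stirling (n + 1) k * stirling (m + 1) (k + 1)) := by
    refine Finset.sum_congr rfl fun k _ => ?_
    rw [stirling_succ (n + 1) k]
    ring
  rw [hR, Finset.sum_add_distrib]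
  congr 1
  · -- first sums: drop top term k = n+1 (stirling (n+1) (n+2) = 0)
    conv_rhs => rw [Finset.sum_range_succ]
    rw [stirling_of_lt (n + 1) (n + 1 + 1) (by omega)]
    simp only [Nat.mul_zero, Nat.zero_mul, mul_zero, zero_mul, add_zero]
    exact Finset.sum_congr rfl fun k _ => by ring
  · -- second sums: shift index, k = 0 term vanishes
    conv_rhs => rw [Finset.sum_range_succ']
    simp only [stirling_succ_zero, Nat.mul_zero, Nat.zero_mul, mul_zero, zero_mul, add_zero]
    refine (Finset.sum_congr rfl fun k _ => ?_).symm
    simp only [Nat.factorial_succ]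
    ring

/-- Recursion for the alternating sum, in ℤ. -/
lemma Lrec (n m : ℕ) :
    ∑ k ∈ Finset.range (n + 3),
        (-1 : ℤ) ^ k * k.factorial * (k : ℤ) ^ m * stirling (n + 2) k
      = -∑ i ∈ Finset.range (m + 1), ((m + 1).choose i : ℤ) *
          ∑ k ∈ Finset.range (n + 2),
            (-1 : ℤ) ^ k * k.factorial * (k : ℤ) ^ i * stirling (n + 1) k := by
  rw [Finset.sum_range_succ']
  simp only [stirling_succ_zero, Nat.cast_zero, mul_zero, add_zero]
  have hsplit : ∀ k ∈ Finset.range (n + 2),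
      (-1 : ℤ) ^ (k + 1) * (k + 1).factorial * ((k : ℤ) + 1) ^ m * stirling (n + 2) (k + 1)
        = (-1 : ℤ) ^ (k + 1) * (k + 1).factorial * ((k : ℤ) + 1) ^ (m + 1)
            * stirling (n + 1) (k + 1)
          - (-1 : ℤ) ^ k * k.factorial * ((k : ℤ) + 1) ^ (m + 1) * stirling (n + 1) k := by
    intro k _
    rw [stirling_succ (n + 1) k]
    push_cast [Nat.factorial_succ, pow_succ]
    ring
  calc ∑ k ∈ Finset.range (n + 2),
        (-1 : ℤ) ^ (k + 1) * ((k + 1).factorial : ℤ) * ((k : ℕ) + 1 : ℤ) ^ m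
          * (stirling (n + 2) (k + 1) : ℤ)
      = ∑ k ∈ Finset.range (n + 2),
          ((-1 : ℤ) ^ (k + 1) * (k + 1).factorial * ((k : ℤ) + 1) ^ (m + 1)
              * stirling (n + 1) (k + 1)
            - (-1 : ℤ) ^ k * k.factorial * ((k : ℤ) + 1) ^ (m + 1) * stirling (n + 1) k) := by
        refine Finset.sum_congr rfl fun k hk => ?_
        push_cast
        exact hsplit k hk
    _ = ∑ k ∈ Finset.range (n + 2),
          (-1 : ℤ) ^ (k + 1) * (k + 1).factorial * ((k : ℤ) + 1) ^ (m + 1)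
            * stirling (n + 1) (k + 1)
        - ∑ k ∈ Finset.range (n + 2),
          (-1 : ℤ) ^ k * k.factorial * ((k : ℤ) + 1) ^ (m + 1) * stirling (n + 1) k :=
        Finset.sum_sub_distrib _ _
    _ = -∑ i ∈ Finset.range (m + 1), ((m + 1).choose i : ℤ) *
          ∑ k ∈ Finset.range (n + 2),
            (-1 : ℤ) ^ k * k.factorial * (k : ℤ) ^ i * stirling (n + 1) k := by
        -- first sum is the full alternating sum at exponent m+1
        have hA : ∑ k ∈ Finset.range (n + 2),
            (-1 : ℤ) ^ (k + 1) * (k + 1).factorial * ((k : ℤ) + 1) ^ (m + 1)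
              * stirling (n + 1) (k + 1)
            = ∑ k ∈ Finset.range (n + 2),
              (-1 : ℤ) ^ k * k.factorial * (k : ℤ) ^ (m + 1) * stirling (n + 1) k := by
          have := Finset.sum_range_succ'
            (fun k => (-1 : ℤ) ^ k * (k.factorial : ℤ) * (k : ℤ) ^ (m + 1)
              * (stirling (n + 1) k : ℤ)) (n + 2)
          rw [Finset.sum_range_succ, stirling_of_lt (n + 1) (n + 2) (by omega)] at this
          simp only [Nat.cast_zero, Nat.cast_ofNat, zero_pow (Nat.succ_ne_zero m),
            mul_zero, zero_mul, add_zero, Nat.cast_zero] at this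
          push_cast at this ⊢
          linarith [this]
        rw [hA]
        -- second sum: expand (k+1)^(m+1) with binomial theorem
        have hB : ∀ k : ℕ, ((k : ℤ) + 1) ^ (m + 1)
            = (k : ℤ) ^ (m + 1) + ∑ i ∈ Finset.range (m + 1), (k : ℤ) ^ i * (m + 1).choose i := by
          intro k
          rw [add_pow, Finset.sum_range_succ]
          simp only [one_pow, Nat.choose_self, Nat.cast_one, mul_one, Nat.sub_self, pow_zero]
          rw [add_comm]
        have hC : ∑ k ∈ Finset.range (n + 2),
            (-1 : ℤ) ^ k * k.factorial * ((k : ℤ) + 1) ^ (m + 1) * stirling (n + 1) k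
            = ∑ k ∈ Finset.range (n + 2),
                (-1 : ℤ) ^ k * k.factorial * (k : ℤ) ^ (m + 1) * stirling (n + 1) k
              + ∑ i ∈ Finset.range (m + 1), ((m + 1).choose i : ℤ) *
                  ∑ k ∈ Finset.range (n + 2),
                    (-1 : ℤ) ^ k * k.factorial * (k : ℤ) ^ i * stirling (n + 1) k := by
          have : ∑ k ∈ Finset.range (n + 2),
              (-1 : ℤ) ^ k * k.factorial * ((k : ℤ) + 1) ^ (m + 1) * stirling (n + 1) k
              = ∑ k ∈ Finset.range (n + 2),
                ((-1 : ℤ) ^ k * k.factorial * (k : ℤ) ^ (m + 1) * stirling (n + 1) k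
                  + ∑ i ∈ Finset.range (m + 1), ((m + 1).choose i : ℤ) *
                      ((-1 : ℤ) ^ k * k.factorial * (k : ℤ) ^ i * stirling (n + 1) k)) := by
            refine Finset.sum_congr rfl fun k _ => ?_
            rw [hB k, mul_add, add_mul]
            congr 1
            rw [Finset.mul_sum, Finset.sum_mul]
            exact Finset.sum_congr rfl fun i _ => by ring
          rw [this, Finset.sum_add_distrib, Finset.sum_comm]
          simp only [Finset.mul_sum]
        rw [hC]
        ring

/-- Main identity: the alternating sum equals the symmetric double-Stirling sum. -/
lemma main_identity (n : ℕ) : ∀ m : ℕ,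
    ∑ k ∈ Finset.range (n + 2),
        (-1 : ℤ) ^ k * k.factorial * (k : ℤ) ^ m * stirling (n + 1) k
      = (-1 : ℤ) ^ (n + 1) * ∑ k ∈ Finset.range (n + 1),
          ((k.factorial : ℤ) * (k + 1).factorial * stirling (n + 1) (k + 1)
            * stirling (m + 1) (k + 1)) := by
  induction n with
  | zero =>
    intro m
    simp [Finset.sum_range_succ]
  | succ n ih =>
    intro m
    rw [Lrec n m]
    have h1 : ∀ i ∈ Finset.range (m + 1), ((m + 1).choose i : ℤ) *
          ∑ k ∈ Finset.range (n + 2),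
            (-1 : ℤ) ^ k * k.factorial * (k : ℤ) ^ i * stirling (n + 1) k
        = (-1 : ℤ) ^ (n + 1) * (((m + 1).choose i : ℤ) *
            ∑ k ∈ Finset.range (n + 1),
              ((k.factorial : ℤ) * (k + 1).factorial * stirling (n + 1) (k + 1)
                * stirling (i + 1) (k + 1))) := by
      intro i _
      rw [ih i]
      ring
    rw [Finset.sum_congr rfl h1, ← Finset.mul_sum]
    have h2 : ∑ i ∈ Finset.range (m + 1), (((m + 1).choose i : ℤ) *
          ∑ k ∈ Finset.range (n + 1),
            ((k.factorial : ℤ) * (k + 1).factorial * stirling (n + 1) (k + 1)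
              * stirling (i + 1) (k + 1)))
        = ∑ k ∈ Finset.range (n + 2),
            ((k.factorial : ℤ) * (k + 1).factorial * stirling (n + 2) (k + 1)
              * stirling (m + 1) (k + 1)) := by
      have := Qrec n m
      have hcast := congrArg (fun x : ℕ => (x : ℤ)) this
      push_cast at hcast
      convert hcast using 2
    rw [h2]
    ring

theorem stirling_sum_symmetric (n m : ℕ) :
    ∑ k ∈ Finset.Icc 1 (n + 1),
        (-1 : ℤ) ^ (n + 1 - k) * (k.factorial : ℤ) * (k : ℤ) ^ m * (stirling (n + 1) k : ℤ) =
      ∑ k ∈ Finset.Icc 1 (m + 1),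
        (-1 : ℤ) ^ (m + 1 - k) * (k.factorial : ℤ) * (k : ℤ) ^ n * (stirling (m + 1) k : ℤ) := by
  -- reduce the Icc sum to a (-1)^(a+1)-scaled range sum
  have hred : ∀ a b : ℕ,
      ∑ k ∈ Finset.Icc 1 (a + 1),
          (-1 : ℤ) ^ (a + 1 - k) * (k.factorial : ℤ) * (k : ℤ) ^ b * (stirling (a + 1) k : ℤ)
        = (-1 : ℤ) ^ (a + 1) * ∑ k ∈ Finset.range (a + 2),
            (-1 : ℤ) ^ k * k.factorial * (k : ℤ) ^ b * stirling (a + 1) k := by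
    intro a b
    rw [Finset.mul_sum]
    have hIcc : Finset.Icc 1 (a + 1) = Finset.Ico 1 (a + 2) := by
      rw [← Finset.Ico_add_one_right_eq_Icc]; rfl
    have hrange : Finset.range (a + 2) = Finset.Ico 0 (a + 2) := by
      rw [Finset.range_eq_Ico]
    rw [hIcc]
    have hsplit : ∑ k ∈ Finset.Ico 0 (a + 2),
        (-1 : ℤ) ^ (a + 1) * ((-1 : ℤ) ^ k * k.factorial * (k : ℤ) ^ b * stirling (a + 1) k)
        = (-1 : ℤ) ^ (a + 1) * ((-1 : ℤ) ^ 0 * (Nat.factorial 0 : ℤ) * (0 : ℤ) ^ b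
            * (stirling (a + 1) 0 : ℤ))
          + ∑ k ∈ Finset.Ico 1 (a + 2),
            (-1 : ℤ) ^ (a + 1) * ((-1 : ℤ) ^ k * k.factorial * (k : ℤ) ^ b * stirling (a + 1) k) := by
      rw [Finset.sum_eq_sum_Ico_succ_bot (by omega)]
      norm_num
    rw [← hrange] at hsplit
    rw [hsplit]
    simp only [stirling_succ_zero, Nat.cast_zero, mul_zero, zero_add]
    refine Finset.sum_congr rfl fun k hk => ?_
    rw [Finset.mem_Ico] at hk
    have hle : k ≤ a + 1 := by omega
    have hsign : (-1 : ℤ) ^ (a + 1 - k) = (-1 : ℤ) ^ (a + 1) * (-1 : ℤ) ^ k := by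
      have : (-1 : ℤ) ^ (a + 1 - k) * (-1 : ℤ) ^ k = (-1 : ℤ) ^ (a + 1) := by
        rw [← pow_add, Nat.sub_add_cancel hle]
      have hk2 : (-1 : ℤ) ^ k * (-1 : ℤ) ^ k = 1 := by
        rw [← pow_add]
        exact Even.neg_one_pow ⟨k, rfl⟩
      calc (-1 : ℤ) ^ (a + 1 - k) = (-1 : ℤ) ^ (a + 1 - k) * ((-1 : ℤ) ^ k * (-1 : ℤ) ^ k) := by
            rw [hk2, mul_one]
        _ = ((-1 : ℤ) ^ (a + 1 - k) * (-1 : ℤ) ^ k) * (-1 : ℤ) ^ k := by ring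
        _ = (-1 : ℤ) ^ (a + 1) * (-1 : ℤ) ^ k := by rw [this]
    rw [hsign]
    ring
  rw [hred n m, hred m n, main_identity n m, main_identity m n]
  -- now both sides are the symmetric double sum (up to enlarging the range)
  have hext : ∀ a b : ℕ, ∑ k ∈ Finset.range (a + 1),
        ((k.factorial : ℤ) * (k + 1).factorial * stirling (a + 1) (k + 1)
          * stirling (b + 1) (k + 1))
      = ∑ k ∈ Finset.range (a + b + 1),
        ((k.factorial : ℤ) * (k + 1).factorial * stirling (a + 1) (k + 1)
          * stirling (b + 1) (k + 1)) := by
    intro a b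
    refine Finset.sum_subset (Finset.range_subset_range.mpr (by omega)) fun k _ hk => ?_
    rw [Finset.mem_range, not_lt] at hk
    rw [stirling_of_lt (a + 1) (k + 1) (by omega)]
    push_cast
    ring
  rw [hext n m, hext m n]
  have hcomm : n + m + 1 = m + n + 1 := by omega
  rw [hcomm]
  have : ∑ k ∈ Finset.range (m + n + 1),
        ((k.factorial : ℤ) * (k + 1).factorial * stirling (n + 1) (k + 1)
          * stirling (m + 1) (k + 1))
      = ∑ k ∈ Finset.range (m + n + 1),
        ((k.factorial : ℤ) * (k + 1).factorial * stirling (m + 1) (k + 1)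
          * stirling (n + 1) (k + 1)) :=
    Finset.sum_congr rfl fun k _ => by ring
  rw [this]
  have hsq : ∀ (a : ℕ) (x : ℤ), (-1 : ℤ) ^ a * ((-1 : ℤ) ^ a * x) = x := by
    intro a x
    rw [← mul_assoc, ← pow_add, Even.neg_one_pow ⟨a, rfl⟩, one_mul]
  rw [hsq, hsq]
end
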